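/- Let Σ symmetric positive definite, Λ ∈ ℝ^{n×m}, Q ∈ ℝ^{n×r} an orthonormal basis of the top r left singular vectors of Λ, P = Q(QᵀΣQ)⁻¹QᵀΣ, and y ∈ ℝ^n. Then ‖((I-P)Λ)ᵀ y‖₂ ≤ √m · √‖Σ‖₂ · σ_{r+1}(Λ) · √(yᵀΣ⁻¹y). -/

import Mathlib

open Matrix

noncomputable def op2 {m n : ℕ} (A : Matrix (Fin m) (Fin n) ℝ) : ℝ :=
  ‖LinearMap.toContinuousLinearMap (Matrix.toEuclideanLin A)‖

noncomputable def enorm2 {n : ℕ} (v : Fin n → ℝ) : ℝ :=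
  Real.sqrt (∑ i, v i ^ 2)

/-- The (r+1)-st singular value, via the Eckart–Young characterization:
the distance (in operator 2-norm) to the set of matrices of rank at most r. -/
noncomputable def sval {n m : ℕ} (A : Matrix (Fin n) (Fin m) ℝ) (r : ℕ) : ℝ :=
  sInf {t | ∃ B : Matrix (Fin n) (Fin m) ℝ, B.rank ≤ r ∧ t = op2 (A - B)}

private lemma dot_cs {n : ℕ} (u v : Fin n → ℝ) :
    (u ⬝ᵥ v) ^ 2 ≤ (u ⬝ᵥ u) * (v ⬝ᵥ v) := by
  simpa [dotProduct, sq] using Finset.sum_mul_sq_le_sq_mul_sq Finset.univ u v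

private lemma mulVec_dot {p q : ℕ} (A : Matrix (Fin p) (Fin q) ℝ) (u : Fin q → ℝ)
    (w : Fin p → ℝ) : (A *ᵥ u) ⬝ᵥ w = u ⬝ᵥ (Aᵀ *ᵥ w) := by
  rw [dotProduct_comm, dotProduct_mulVec, ← vecMul_transpose, transpose_transpose,
    dotProduct_comm]

private lemma dot_sandwich {a b : ℕ} (W : Matrix (Fin a) (Fin b) ℝ)
    (H : Matrix (Fin a) (Fin a) ℝ) (x : Fin b → ℝ) :
    x ⬝ᵥ (Wᵀ * H * W) *ᵥ x = (W *ᵥ x) ⬝ᵥ H *ᵥ (W *ᵥ x) := by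
  rw [← Matrix.mulVec_mulVec, ← Matrix.mulVec_mulVec, ← mulVec_dot]

private lemma op2_mulVec_dot {p q : ℕ} (A : Matrix (Fin p) (Fin q) ℝ) (v : Fin q → ℝ) :
    (A *ᵥ v) ⬝ᵥ (A *ᵥ v) ≤ op2 A ^ 2 * (v ⬝ᵥ v) := by
  set L := LinearMap.toContinuousLinearMap (Matrix.toEuclideanLin A) with hL
  set x : EuclideanSpace ℝ (Fin q) := (WithLp.equiv 2 (Fin q → ℝ)).symm v with hx
  have hxn : ‖x‖ ^ 2 = v ⬝ᵥ v := by
    rw [EuclideanSpace.norm_eq, Real.sq_sqrt (by positivity)]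
    simp [hx, dotProduct, sq]
  have hLx : L x = (WithLp.equiv 2 (Fin p → ℝ)).symm (A *ᵥ v) := by
    simp [hL, hx]
  have h1 : ‖L x‖ ^ 2 = (A *ᵥ v) ⬝ᵥ (A *ᵥ v) := by
    rw [hLx, EuclideanSpace.norm_eq, Real.sq_sqrt (by positivity)]
    simp [dotProduct, sq]
  have h2 : ‖L x‖ ≤ ‖L‖ * ‖x‖ := L.le_opNorm x
  calc (A *ᵥ v) ⬝ᵥ (A *ᵥ v) = ‖L x‖ ^ 2 := h1.symm
    _ ≤ (‖L‖ * ‖x‖) ^ 2 := pow_le_pow_left₀ (norm_nonneg _) h2 2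
    _ = op2 A ^ 2 * (v ⬝ᵥ v) := by rw [mul_pow, hxn]; rfl

private lemma cs_S {n : ℕ} {S : Matrix (Fin n) (Fin n) ℝ} (hS : S.PosDef) (u v : Fin n → ℝ) :
    (u ⬝ᵥ v) ^ 2 ≤ (u ⬝ᵥ S *ᵥ u) * (v ⬝ᵥ S⁻¹ *ᵥ v) := by
  open scoped MatrixOrder Matrix.Norms.L2Operator in
  set T := CFC.sqrt S with hTdef
  open scoped MatrixOrder Matrix.Norms.L2Operator in
  have hTT : T * T = S := CFC.sqrt_mul_sqrt_self S hS.posSemidef.nonneg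
  have hTsym : Tᵀ = T := by
    open scoped MatrixOrder Matrix.Norms.L2Operator in
    have h := (CFC.sqrt_nonneg S).posSemidef.isHermitian
    rw [Matrix.IsHermitian, Matrix.conjTranspose_eq_transpose_of_trivial] at h
    exact h
  have hdet : IsUnit T.det := by
    have hmul : T.det * T.det = S.det := by rw [← Matrix.det_mul, hTT]
    have hpos := hS.det_pos
    have hne : T.det ≠ 0 := by
      intro h; rw [h, mul_zero] at hmul; exact hpos.ne' hmul.symm
    exact hne.isUnit
  have hT1 : T * T⁻¹ = 1 := Matrix.mul_nonsing_inv _ hdet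
  have huv : u ⬝ᵥ v = (T *ᵥ u) ⬝ᵥ (T⁻¹ *ᵥ v) := by
    rw [mulVec_dot, hTsym, Matrix.mulVec_mulVec, hT1, Matrix.one_mulVec]
  have h2 : (T *ᵥ u) ⬝ᵥ (T *ᵥ u) = u ⬝ᵥ S *ᵥ u := by
    rw [mulVec_dot, hTsym, Matrix.mulVec_mulVec, hTT]
  have h3 : (T⁻¹ *ᵥ v) ⬝ᵥ (T⁻¹ *ᵥ v) = v ⬝ᵥ S⁻¹ *ᵥ v := by
    rw [mulVec_dot, Matrix.transpose_nonsing_inv, hTsym, Matrix.mulVec_mulVec,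
      ← Matrix.mul_inv_rev, hTT]
  rw [huv, ← h2, ← h3]
  exact dot_cs _ _

private lemma dot_self_nonneg {n : ℕ} (v : Fin n → ℝ) : 0 ≤ v ⬝ᵥ v :=
  Finset.sum_nonneg fun _ _ => mul_self_nonneg _

private lemma quad_le_op2 {n : ℕ} {S : Matrix (Fin n) (Fin n) ℝ} (hS : S.PosSemidef)
    (v : Fin n → ℝ) : v ⬝ᵥ S *ᵥ v ≤ op2 S * (v ⬝ᵥ v) := by
  have h0 : 0 ≤ v ⬝ᵥ S *ᵥ v := by simpa using hS.dotProduct_mulVec_nonneg v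
  have h1 : (v ⬝ᵥ S *ᵥ v) ^ 2 ≤ (v ⬝ᵥ v) * ((S *ᵥ v) ⬝ᵥ (S *ᵥ v)) := dot_cs v (S *ᵥ v)
  have h2 := op2_mulVec_dot S v
  have hv := dot_self_nonneg v
  have hop : (0:ℝ) ≤ op2 S := norm_nonneg _
  have hsq : (v ⬝ᵥ S *ᵥ v) ^ 2 ≤ (op2 S * (v ⬝ᵥ v)) ^ 2 := by nlinarith
  calc v ⬝ᵥ S *ᵥ v = Real.sqrt ((v ⬝ᵥ S *ᵥ v) ^ 2) := (Real.sqrt_sq h0).symm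
    _ ≤ Real.sqrt ((op2 S * (v ⬝ᵥ v)) ^ 2) := Real.sqrt_le_sqrt hsq
    _ = op2 S * (v ⬝ᵥ v) := Real.sqrt_sq (mul_nonneg hop hv)

/-- Conditional-mean error bound: ‖((I−P)Λ)ᵀy‖₂ ≤ √m·√‖Σ‖₂·σ_{r+1}(Λ)·√(yᵀΣ⁻¹y). -/
theorem stmt17 {n m r : ℕ} (S : Matrix (Fin n) (Fin n) ℝ) (hS : S.PosDef)
    (Λ : Matrix (Fin n) (Fin m) ℝ)
    (Q : Matrix (Fin n) (Fin r) ℝ) (hQ : Qᵀ * Q = 1)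
    (hTop : op2 ((1 - Q * Qᵀ) * Λ) = sval Λ r)
    (y : Fin n → ℝ) :
    enorm2 ((((1 - Q * (Qᵀ * S * Q)⁻¹ * Qᵀ * S) * Λ)ᵀ) *ᵥ y)
      ≤ Real.sqrt m * Real.sqrt (op2 S) * sval Λ r * Real.sqrt (y ⬝ᵥ (S⁻¹ *ᵥ y)) := by
  classical
  have hSt : Sᵀ = S := by
    have h := hS.isHermitian
    rw [Matrix.IsHermitian, Matrix.conjTranspose_eq_transpose_of_trivial] at h
    exact h
  set G := Qᵀ * S * Q with hGdef
  have hGt : Gᵀ = G := by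
    rw [hGdef]
    simp only [Matrix.transpose_mul, Matrix.transpose_transpose, hSt, Matrix.mul_assoc]
  -- injectivity of Q
  have hQinj : ∀ x : Fin r → ℝ, Q *ᵥ x = 0 → x = 0 := by
    intro x hx
    have h : Qᵀ *ᵥ (Q *ᵥ x) = 0 := by rw [hx, Matrix.mulVec_zero]
    rwa [Matrix.mulVec_mulVec, hQ, Matrix.one_mulVec] at h
  -- G is positive definite
  have hG : G.PosDef := by
    refine Matrix.PosDef.of_dotProduct_mulVec_pos ?_ ?_
    · rw [Matrix.IsHermitian, Matrix.conjTranspose_eq_transpose_of_trivial, hGt]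
    · intro x hx
      have hq : Q *ᵥ x ≠ 0 := fun h => hx (hQinj x h)
      have := hS.dotProduct_mulVec_pos hq
      rw [star_trivial] at this
      have hd : x ⬝ᵥ G *ᵥ x = (Q *ᵥ x) ⬝ᵥ S *ᵥ (Q *ᵥ x) := by
        rw [hGdef]
        exact dot_sandwich Q S x
      rw [star_trivial, hd]
      exact this
  have hdetG : IsUnit G.det := (Matrix.isUnit_iff_isUnit_det _).1 hG.isUnit
  have h2 : G * G⁻¹ = 1 := Matrix.mul_nonsing_inv _ hdetG
  have h1 : G⁻¹ * G = 1 := Matrix.nonsing_inv_mul _ hdetG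
  have hGinvT : G⁻¹ᵀ = G⁻¹ := by rw [Matrix.transpose_nonsing_inv, hGt]
  set M := 1 - Q * G⁻¹ * Qᵀ * S with hMdef
  -- M kills Q
  have hMQ : M * Q = 0 := by
    have hq : Qᵀ * (S * Q) = G := by rw [hGdef, Matrix.mul_assoc]
    rw [hMdef]
    simp only [Matrix.sub_mul, Matrix.one_mul, Matrix.mul_assoc, hq]
    rw [h1]
    simp
  have hMP : ∀ X : Matrix (Fin r) (Fin n) ℝ, M * (Q * X) = 0 := by
    intro X; rw [← Matrix.mul_assoc, hMQ, Matrix.zero_mul]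
  have hMM : M * M = M := by
    have he : M * M = M * 1 - M * (Q * (G⁻¹ * (Qᵀ * S))) := by
      rw [← Matrix.mul_sub]
      congr 1
      rw [hMdef]
      simp only [Matrix.mul_assoc]
    rw [he, hMP, Matrix.mul_one, sub_zero]
  have hMt : Mᵀ * S = S * M := by
    rw [hMdef]
    simp only [Matrix.transpose_sub, Matrix.transpose_mul, Matrix.transpose_one,
      Matrix.transpose_transpose, hSt, hGinvT, Matrix.sub_mul, Matrix.mul_sub,
      Matrix.one_mul, Matrix.mul_one, Matrix.mul_assoc]
  have key : Mᵀ * S * M = S - (Qᵀ * S)ᵀ * G⁻¹ * (Qᵀ * S) := by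
    rw [hMt, Matrix.mul_assoc, hMM, hMdef]
    simp only [Matrix.mul_sub, Matrix.mul_one, Matrix.transpose_mul,
      Matrix.transpose_transpose, hSt, Matrix.mul_assoc]
  -- projection inequality
  have proj : ∀ x : Fin n → ℝ, (M *ᵥ x) ⬝ᵥ S *ᵥ (M *ᵥ x) ≤ x ⬝ᵥ S *ᵥ x := by
    intro x
    have e1 := dot_sandwich M S x
    have e2 := dot_sandwich (Qᵀ * S) G⁻¹ x
    have e3 : (0:ℝ) ≤ ((Qᵀ * S) *ᵥ x) ⬝ᵥ G⁻¹ *ᵥ ((Qᵀ * S) *ᵥ x) := by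
      simpa using hG.inv.posSemidef.dotProduct_mulVec_nonneg ((Qᵀ * S) *ᵥ x)
    have e4 : x ⬝ᵥ (Mᵀ * S * M) *ᵥ x
        = x ⬝ᵥ S *ᵥ x - ((Qᵀ * S) *ᵥ x) ⬝ᵥ G⁻¹ *ᵥ ((Qᵀ * S) *ᵥ x) := by
      rw [key, Matrix.sub_mulVec, dotProduct_sub, e2]
    linarith [e1, e4, e3]
  -- singular-value data
  set B := (1 - Q * Qᵀ) * Λ with hBdef
  have hMB : M * B = M * Λ := by
    rw [hBdef, ← Matrix.mul_assoc, Matrix.mul_sub, Matrix.mul_one, hMP Qᵀ, sub_zero]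
  have hd0 : (0:ℝ) ≤ y ⬝ᵥ S⁻¹ *ᵥ y := by simpa using hS.inv.posSemidef.dotProduct_mulVec_nonneg y
  have hop : (0:ℝ) ≤ op2 S := norm_nonneg _
  have hσ : (0:ℝ) ≤ op2 B := norm_nonneg _
  set w : Fin m → ℝ := ((M * Λ)ᵀ) *ᵥ y with hwdef
  set d : ℝ := y ⬝ᵥ S⁻¹ *ᵥ y with hddef
  -- per-entry bound
  have entry : ∀ k, (w k) ^ 2 ≤ op2 S * (op2 B ^ 2 * d) := by
    intro k
    set b : Fin n → ℝ := B *ᵥ Pi.single k 1 with hbdef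
    set c : Fin n → ℝ := M *ᵥ b with hcdef
    have hc : c = (M * Λ) *ᵥ Pi.single k 1 := by
      rw [hcdef, hbdef, Matrix.mulVec_mulVec, hMB]
    have hwk : w k = c ⬝ᵥ y := by
      rw [hwdef, hc]
      simp [Matrix.mulVec, dotProduct, Matrix.transpose_apply, Pi.single_apply,
        Finset.mul_sum, mul_comm]
    have hbb : b ⬝ᵥ b ≤ op2 B ^ 2 := by
      have h := op2_mulVec_dot B (Pi.single k 1)
      have hs : (Pi.single k 1 : Fin m → ℝ) ⬝ᵥ Pi.single k 1 = 1 := by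
        simp [dotProduct_single]
      rw [hs, mul_one] at h
      exact h
    have hcs : (c ⬝ᵥ y) ^ 2 ≤ (c ⬝ᵥ S *ᵥ c) * d := cs_S hS c y
    have hpr : c ⬝ᵥ S *ᵥ c ≤ b ⬝ᵥ S *ᵥ b := proj b
    have hq : b ⬝ᵥ S *ᵥ b ≤ op2 S * (b ⬝ᵥ b) := quad_le_op2 hS.posSemidef b
    have hq2 : b ⬝ᵥ S *ᵥ b ≤ op2 S * op2 B ^ 2 :=
      le_trans hq (mul_le_mul_of_nonneg_left hbb hop)
    have hcb : c ⬝ᵥ S *ᵥ c ≤ op2 S * op2 B ^ 2 := le_trans hpr hq2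
    calc (w k) ^ 2 = (c ⬝ᵥ y) ^ 2 := by rw [hwk]
      _ ≤ (c ⬝ᵥ S *ᵥ c) * d := hcs
      _ ≤ (op2 S * op2 B ^ 2) * d := mul_le_mul_of_nonneg_right hcb hd0
      _ = op2 S * (op2 B ^ 2 * d) := by ring
  have hsum : ∑ k, (w k) ^ 2 ≤ (m : ℝ) * (op2 S * (op2 B ^ 2 * d)) := by
    calc ∑ k, (w k) ^ 2 ≤ ∑ _k : Fin m, op2 S * (op2 B ^ 2 * d) :=
          Finset.sum_le_sum fun k _ => entry k
      _ = (m : ℝ) * (op2 S * (op2 B ^ 2 * d)) := by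
          simp [Finset.sum_const, Fintype.card_fin, nsmul_eq_mul]
  rw [← hTop]
  have hRHS0 : (0:ℝ) ≤ Real.sqrt m * Real.sqrt (op2 S) * op2 B * Real.sqrt d := by
    positivity
  have hRHSsq : (Real.sqrt m * Real.sqrt (op2 S) * op2 B * Real.sqrt d) ^ 2
      = (m : ℝ) * (op2 S * (op2 B ^ 2 * d)) := by
    rw [mul_pow, mul_pow, mul_pow, Real.sq_sqrt (Nat.cast_nonneg m),
      Real.sq_sqrt hop, Real.sq_sqrt hd0]
    ring
  have : enorm2 w ≤ Real.sqrt m * Real.sqrt (op2 S) * op2 B * Real.sqrt d := by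
    rw [enorm2]
    calc Real.sqrt (∑ i, w i ^ 2)
        ≤ Real.sqrt ((Real.sqrt m * Real.sqrt (op2 S) * op2 B * Real.sqrt d) ^ 2) :=
          Real.sqrt_le_sqrt (by rw [hRHSsq]; exact hsum)
      _ = _ := Real.sqrt_sq hRHS0
  exact this
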